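/- Subset substructure (for the dynamic-programming recurrence): define F(i, j) over bidders sorted in decreasing adjusted ecpm by F(n+1, j) = 0, F(i, k+1) = 0, and F(i, j) = max(e_i + q_i · F(i+1, j+1), F(i+1, j)). Then F(1, 1) equals the maximum efficiency over all lists of at most k distinct bidders sorted in decreasing adjusted-ecpm order. -/

import Mathlib

noncomputable section

/-- Efficiency of an ordered list of ads `(e, q)`. -/
def eff : List (ℝ × ℝ) → ℝ
  | [] => 0
  | a :: L => a.1 + a.2 * eff L

/-- Product of continuation probabilities of a list of ads. -/
def qprod (L : List (ℝ × ℝ)) : ℝ := (L.map Prod.snd).prod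

/-- The dynamic program `F(i,j) = max(e_i + q_i·F(i+1,j+1), F(i+1,j))`, phrased over
the list of remaining bidders and the number of remaining slots. -/
def dpF : List (ℝ × ℝ) → ℕ → ℝ
  | [], _ => 0
  | _ :: _, 0 => 0
  | a :: L, (m + 1) => max (a.1 + a.2 * dpF L m) (dpF L (m + 1))

/-- With bidders sorted in (strictly) decreasing adjusted-ecpm order, `F(1,1)` (i.e.
`dpF L k`) equals the maximum efficiency over all lists of at most `k` distinct
bidders listed in decreasing adjusted-ecpm order (i.e. sublists of `L`). -/

lemma dpF_attained : ∀ (L : List (ℝ × ℝ)) (k : ℕ),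
    ∃ S : List (ℝ × ℝ), S.Sublist L ∧ S.length ≤ k ∧ eff S = dpF L k
  | [], k => ⟨[], List.Sublist.refl _, by simp, rfl⟩
  | a :: L, 0 => ⟨[], by simp, by simp, rfl⟩
  | a :: L, (m + 1) => by
    obtain ⟨S1, hs1, hl1, he1⟩ := dpF_attained L m
    obtain ⟨S2, hs2, hl2, he2⟩ := dpF_attained L (m + 1)
    rcases le_total (dpF L (m+1)) (a.1 + a.2 * dpF L m) with h | h
    · exact ⟨a :: S1, hs1.cons₂ a, by simpa using hl1,
        by simp [eff, he1, dpF, max_eq_left h]⟩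
    · exact ⟨S2, hs2.cons a, hl2, by simp [he2, dpF, max_eq_right h]⟩

lemma dpF_ub (L : List (ℝ × ℝ)) : ∀ (k : ℕ) (S : List (ℝ × ℝ)),
    (∀ a ∈ L, 0 ≤ a.2) → S.Sublist L → S.length ≤ k → eff S ≤ dpF L k := by
  induction L with
  | nil =>
    intro k S hq hs hl
    simp [List.sublist_nil] at hs
    subst hs; simp [eff, dpF]
  | cons a L ih =>
    intro k S hq hs hl
    have hq' : ∀ b ∈ L, 0 ≤ b.2 := fun b hb => hq b (List.mem_cons_of_mem a hb)
    cases S with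
    | nil =>
      cases k with
      | zero => simp [eff, dpF]
      | succ m =>
        calc eff ([] : List (ℝ × ℝ)) ≤ dpF L (m+1) :=
              ih (m+1) [] hq' (List.nil_sublist L) (by simp)
          _ ≤ _ := le_max_right _ _
    | cons b S =>
      cases k with
      | zero => simp at hl
      | succ m =>
        rcases hs with hs | hs
        case cons hs =>
          calc eff (b :: S) ≤ dpF L (m+1) := ih (m+1) (b :: S) hq' hs hl
            _ ≤ _ := le_max_right _ _
        case cons_cons hs =>
          have hle : eff S ≤ dpF L m := ih m S hq' hs (by simpa using hl)
          have ha2 : 0 ≤ a.2 := hq a (List.mem_cons_self (a := a) (l := L))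
          calc eff (a :: S) = a.1 + a.2 * eff S := rfl
            _ ≤ a.1 + a.2 * dpF L m := by nlinarith
            _ ≤ _ := le_max_left _ _

theorem dp_computes_optimum
    (L : List (ℝ × ℝ)) (k : ℕ)
    (hL : ∀ a ∈ L, 0 ≤ a.1 ∧ 0 ≤ a.2 ∧ a.2 < 1)
    (hsorted : L.Pairwise (fun u v => u.1 / (1 - u.2) > v.1 / (1 - v.2))) :
    IsGreatest {x : ℝ | ∃ S : List (ℝ × ℝ), S.Sublist L ∧ S.length ≤ k ∧ eff S = x}
      (dpF L k) := by
  constructor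
  · exact dpF_attained L k
  · rintro x ⟨S, hs, hl, rfl⟩
    exact dpF_ub L k S (fun a ha => (hL a ha).2.1) hs hl
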